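/- For every positive integer k there exists a tree on 7k vertices with at least 3^k perfect codes. Consequently the growth rate limsup over trees of order n of the maximum number of perfect codes, raised to power 1/n, is at least 3^{1/7}. -/

import Mathlib

/-- `S` is a perfect code of `G` : an independent set such that every vertex outside
`S` has exactly one neighbor in `S`. -/
def IsPerfectCode {V : Type*} (G : SimpleGraph V) (S : Set V) : Prop :=
  (∀ a ∈ S, ∀ b ∈ S, ¬ G.Adj a b) ∧ (∀ v, v ∉ S → ∃! u, u ∈ S ∧ G.Adj u v)

/-! ### Auxiliary definitions: the tree `T_k` via a parent function -/

/-- The parent function: vertex `7i` is the centre of block `i`, vertices `7i+1, 7i+2, 7i+3`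
are middles attached to the centre, vertices `7i+4, 7i+5, 7i+6` are leaves attached to the
corresponding middles; centres form a path. -/
def par (v : ℕ) : ℕ :=
  if v % 7 = 0 then v - 7 else if v % 7 ≤ 3 then v - v % 7 else v - 3

lemma par_lt {v : ℕ} (h : v ≠ 0) : par v < v := by
  unfold par; split
  · omega
  · split <;> omega

/-- The tree on `7k` vertices: each non-root vertex is joined to its parent. -/
def TG (k : ℕ) : SimpleGraph (Fin (7 * k)) where
  Adj a b := (b.val ≠ 0 ∧ a.val = par b.val) ∨ (a.val ≠ 0 ∧ b.val = par a.val)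
  symm := by constructor; intro a b h; tauto
  loopless := by
    constructor
    intro a h
    rcases h with ⟨h1, h2⟩ | ⟨h1, h2⟩ <;> exact absurd h2 (Nat.ne_of_gt (par_lt h1))

lemma TG_connected {k : ℕ} (hk : 0 < k) : (TG k).Connected := by
  have h0 : (0 : ℕ) < 7 * k := by omega
  rw [SimpleGraph.connected_iff]
  refine ⟨?_, ⟨⟨0, h0⟩⟩⟩
  have key : ∀ n : ℕ, ∀ v : Fin (7 * k), v.val = n → (TG k).Reachable v ⟨0, h0⟩ := by
    intro n
    induction n using Nat.strong_induction_on with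
    | _ n ih =>
      intro v hv
      rcases Nat.eq_zero_or_pos n with h | h
      · have : v = ⟨0, h0⟩ := Fin.ext (by simp [hv, h])
        rw [this]
      · have hne : v.val ≠ 0 := by omega
        have hlt : par v.val < v.val := par_lt hne
        have hb : par v.val < 7 * k := lt_trans hlt v.2
        have hadj : (TG k).Adj v ⟨par v.val, hb⟩ := Or.inr ⟨hne, rfl⟩
        exact hadj.reachable.trans (ih (par v.val) (by omega) _ rfl)
  intro u v
  exact (key u.val u rfl).trans (key v.val v rfl).symm

/-! ### Acyclicity of parent graphs -/

lemma path_getVert_inj {V : Type*} {G : SimpleGraph V} {u v : V} (p : G.Walk u v)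
    (hp : p.IsPath) : ∀ i j, i ≤ p.length → j ≤ p.length → p.getVert i = p.getVert j → i = j := by
  induction p with
  | nil => intro i j hi hj _; simp at hi hj; omega
  | cons h q ih =>
    rw [SimpleGraph.Walk.cons_isPath_iff] at hp
    intro i j hi hj hij
    simp [SimpleGraph.Walk.length_cons] at hi hj
    match i, j with
    | 0, 0 => rfl
    | 0, j+1 =>
      exfalso
      rw [SimpleGraph.Walk.getVert_zero, SimpleGraph.Walk.getVert_cons_succ] at hij
      exact hp.2 (SimpleGraph.Walk.mem_support_iff_exists_getVert.2 ⟨j, hij.symm, by omega⟩)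
    | i+1, 0 =>
      exfalso
      rw [SimpleGraph.Walk.getVert_zero, SimpleGraph.Walk.getVert_cons_succ] at hij
      exact hp.2 (SimpleGraph.Walk.mem_support_iff_exists_getVert.2 ⟨i, hij, by omega⟩)
    | i+1, j+1 =>
      rw [SimpleGraph.Walk.getVert_cons_succ, SimpleGraph.Walk.getVert_cons_succ] at hij
      have := ih hp.1 i j (by omega) (by omega) hij
      omega

/-- A graph on `Fin n` where the smaller endpoint of every edge is determined
by the larger one (a "parent" function) is acyclic. -/
lemma parent_acyclic {n : ℕ} (p : ℕ → ℕ) (G : SimpleGraph (Fin n))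
    (hpar : ∀ a b : Fin n, G.Adj a b → a.val < b.val → a.val = p b.val) :
    G.IsAcyclic := by
  have key : ∀ (m : Fin n) (c : G.Walk m m), c.IsCycle →
      (∀ x ∈ c.support, x.val ≤ m.val) → False := by
    intro m c hc hmax
    cases c with
    | nil => exact hc.ne_nil rfl
    | @cons _ w _ hadj q =>
      have hq : q.IsPath ∧ s(m, w) ∉ q.edges := (SimpleGraph.Walk.cons_isCycle_iff _ _).1 hc
      have hlen : 2 ≤ q.length := by
        have := hc.three_le_length
        simp [SimpleGraph.Walk.length_cons] at this
        omega
      have hadjy : G.Adj (q.getVert (q.length - 1)) m := by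
        have := q.adj_getVert_succ (i := q.length - 1) (by omega)
        have h2 : q.length - 1 + 1 = q.length := by omega
        rw [h2, SimpleGraph.Walk.getVert_length] at this
        exact this
      have hxs : w ∈ (SimpleGraph.Walk.cons hadj q).support := by
        rw [SimpleGraph.Walk.support_cons]
        exact List.mem_cons_of_mem _ q.start_mem_support
      have hys : q.getVert (q.length - 1) ∈ (SimpleGraph.Walk.cons hadj q).support := by
        rw [SimpleGraph.Walk.support_cons]
        exact List.mem_cons_of_mem _
          (SimpleGraph.Walk.mem_support_iff_exists_getVert.2 ⟨q.length - 1, rfl, by omega⟩)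
      have hxm : w ≠ m := hadj.ne'
      have hym : q.getVert (q.length - 1) ≠ m := by
        intro hcon
        have : q.getVert (q.length - 1) = q.getVert q.length := by
          rw [SimpleGraph.Walk.getVert_length]; exact hcon
        have := path_getVert_inj q hq.1 _ _ (by omega) (le_refl _) this
        omega
      have hxy : w ≠ q.getVert (q.length - 1) := by
        intro hcon
        have : q.getVert 0 = q.getVert (q.length - 1) := by
          rw [SimpleGraph.Walk.getVert_zero]; exact hcon
        have := path_getVert_inj q hq.1 _ _ (by omega) (by omega) this
        omega
      have hxlt : w.val < m.val := lt_of_le_of_ne (hmax w hxs) (fun h => hxm (Fin.ext h))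
      have hylt : (q.getVert (q.length - 1)).val < m.val :=
        lt_of_le_of_ne (hmax _ hys) (fun h => hym (Fin.ext h))
      have h1 : w.val = p m.val := hpar w m hadj.symm hxlt
      have h2 : (q.getVert (q.length - 1)).val = p m.val := hpar _ m hadjy hylt
      exact hxy (Fin.ext (h1.trans h2.symm))
  intro v c hc
  obtain ⟨m, hm_mem, hm_max⟩ : ∃ m ∈ c.support, ∀ x ∈ c.support, x.val ≤ m.val := by
    classical
    obtain ⟨m, hmem, hmax⟩ := c.support.toFinset.exists_max_image (fun x => x.val)
      ⟨v, by simp⟩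
    exact ⟨m, by simpa using hmem, fun x hx => hmax x (by simpa using hx)⟩
  have hc' := hc.rotate hm_mem
  apply key m (c.rotate m hm_mem) hc'
  intro x hx
  apply hm_max
  rw [SimpleGraph.Walk.support_eq_cons] at hx
  rcases List.mem_cons.1 hx with h | h
  · rwa [h]
  · have hperm := SimpleGraph.Walk.support_rotate c m hm_mem
    have hmem : x ∈ c.support.tail := hperm.mem_iff.1 h
    rw [SimpleGraph.Walk.support_eq_cons c]
    exact List.mem_cons_of_mem _ hmem

lemma TG_acyclic {k : ℕ} : (TG k).IsAcyclic := by
  apply parent_acyclic par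
  intro a b hadj hlt
  rcases hadj with ⟨h1, h2⟩ | ⟨h1, h2⟩
  · exact h2
  · exfalso; have := par_lt h1; omega

/-! ### The perfect codes -/

def blk {k : ℕ} (v : Fin (7 * k)) : Fin k := ⟨v.val / 7, by have := v.2; omega⟩

/-- The perfect code determined by a choice `f i` of a distinguished leg in each block:
it consists of the middle vertex of the chosen leg and the leaves of the other two legs. -/
def codeSet {k : ℕ} (f : Fin k → Fin 3) : Set (Fin (7 * k)) :=
  {v | v.val % 7 = (f (blk v)).val + 1 ∨ (4 ≤ v.val % 7 ∧ v.val % 7 ≠ (f (blk v)).val + 4)}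

lemma blk_eq {k : ℕ} {u v : Fin (7 * k)} (h : u.val / 7 = v.val / 7) : blk u = blk v :=
  Fin.ext h

set_option linter.unreachableTactic false in
set_option linter.unusedTactic false in
set_option linter.unnecessarySeqFocus false in
lemma codeSet_perfect {k : ℕ} (f : Fin k → Fin 3) : IsPerfectCode (TG k) (codeSet f) := by
  constructor
  · -- independence
    intro a ha b hb hadj
    simp only [codeSet, Set.mem_setOf_eq] at ha hb
    rcases hadj with ⟨hb0, hab⟩ | ⟨ha0, hab⟩
    · -- a.val = par b.val
      have hcb : (f (blk b)).val < 3 := (f (blk b)).2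
      have hca : (f (blk a)).val < 3 := (f (blk a)).2
      unfold par at hab
      split at hab
      · -- b % 7 = 0 : b ∉ codeSet
        rcases hb with hb | hb <;> omega
      · split at hab
        · -- b%7 ∈ {1,2,3} : a%7 = 0, a ∉ codeSet
          have : a.val % 7 = 0 := by omega
          rcases ha with ha | ha <;> omega
        · -- b%7 ≥ 4, a = b - 3, same block
          have hq : a.val / 7 = b.val / 7 := by omega
          rw [blk_eq hq] at ha
          rcases ha with ha | ha <;> rcases hb with hb | hb <;> omega
    · -- b.val = par a.val : symmetric
      have hcb : (f (blk b)).val < 3 := (f (blk b)).2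
      have hca : (f (blk a)).val < 3 := (f (blk a)).2
      unfold par at hab
      split at hab
      · rcases ha with ha | ha <;> omega
      · split at hab
        · have : b.val % 7 = 0 := by omega
          rcases hb with hb | hb <;> omega
        · have hq : b.val / 7 = a.val / 7 := by omega
          rw [blk_eq hq] at hb
          rcases ha with ha | ha <;> rcases hb with hb | hb <;> omega
  · -- domination
    intro v hv
    have hc : (f (blk v)).val < 3 := (f (blk v)).2
    simp only [codeSet, Set.mem_setOf_eq, not_or, not_and_or] at hv
    obtain ⟨hv1, hv2⟩ := hv
    by_cases h0 : v.val % 7 = 0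
    · -- v is a center; unique neighbor: middle v + c + 1
      have hbnd : v.val + (f (blk v)).val + 1 < 7 * k := by have := v.2; omega
      refine ⟨⟨v.val + (f (blk v)).val + 1, hbnd⟩, ⟨?_, ?_⟩, ?_⟩
      · -- membership
        have hq : (v.val + (f (blk v)).val + 1) / 7 = v.val / 7 := by omega
        left
        show (v.val + (f (blk v)).val + 1) % 7 = _ + 1
        rw [blk_eq (u := ⟨v.val + (f (blk v)).val + 1, hbnd⟩) hq]
        omega
      · -- adjacency
        right
        refine ⟨show v.val + (f (blk v)).val + 1 ≠ 0 by omega, ?_⟩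
        show v.val = par (v.val + (f (blk v)).val + 1)
        unfold par; split; omega; split <;> omega
      · -- uniqueness
        rintro u ⟨hu, (⟨hv0, hupar⟩ | ⟨hu0, hupar⟩)⟩ <;>
          simp only [codeSet, Set.mem_setOf_eq] at hu
        · -- u.val = par v.val = v - 7 : center, not in codeSet
          exfalso
          have hcu : (f (blk u)).val < 3 := (f (blk u)).2
          unfold par at hupar
          split at hupar
          · rcases hu with hu | hu <;> omega
          · omega
        · -- v.val = par u.val
          have hcu : (f (blk u)).val < 3 := (f (blk u)).2
          unfold par at hupar
          split at hupar
          · exfalso; rcases hu with hu | hu <;> omega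
          · split at hupar
            · -- u%7 ∈ {1,2,3}, same block as v
              have hq : u.val / 7 = v.val / 7 := by omega
              rw [blk_eq hq] at hu
              apply Fin.ext
              show u.val = v.val + (f (blk v)).val + 1
              rcases hu with hu | hu <;> omega
            · exfalso; omega
    · by_cases h1 : v.val % 7 ≤ 3
      · -- v is an unchosen middle; unique neighbor: leaf v + 3
        have hne : v.val % 7 ≠ (f (blk v)).val + 1 := hv1
        have hbnd : v.val + 3 < 7 * k := by have := v.2; omega
        refine ⟨⟨v.val + 3, hbnd⟩, ⟨?_, ?_⟩, ?_⟩
        · have hq : (v.val + 3) / 7 = v.val / 7 := by omega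
          right
          show 4 ≤ (v.val + 3) % 7 ∧ (v.val + 3) % 7 ≠ _ + 4
          rw [blk_eq (u := ⟨v.val + 3, hbnd⟩) hq]
          omega
        · right
          refine ⟨show v.val + 3 ≠ 0 by omega, ?_⟩
          show v.val = par (v.val + 3)
          unfold par; split; omega; split <;> omega
        · rintro u ⟨hu, (⟨hv0, hupar⟩ | ⟨hu0, hupar⟩)⟩ <;>
            simp only [codeSet, Set.mem_setOf_eq] at hu
          · -- u = par v = v - v%7 : center, not in codeSet
            exfalso
            have hcu : (f (blk u)).val < 3 := (f (blk u)).2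
            unfold par at hupar
            split_ifs at hupar <;> first
              | omega
              | (rcases hu with hu | hu <;> omega)
          · have hcu : (f (blk u)).val < 3 := (f (blk u)).2
            unfold par at hupar
            split_ifs at hupar <;> first
              | (exfalso; omega)
              | (apply Fin.ext; show u.val = v.val + 3; omega)
      · -- v is the chosen leaf (v%7 = c + 4); unique neighbor: middle v - 3
        have heq : v.val % 7 = (f (blk v)).val + 4 := by
          rcases hv2 with h | h <;> omega
        have hbnd : v.val - 3 < 7 * k := by have := v.2; omega
        refine ⟨⟨v.val - 3, hbnd⟩, ⟨?_, ?_⟩, ?_⟩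
        · have hq : (v.val - 3) / 7 = v.val / 7 := by omega
          left
          show (v.val - 3) % 7 = _ + 1
          rw [blk_eq (u := ⟨v.val - 3, hbnd⟩) hq]
          omega
        · left
          refine ⟨show v.val ≠ 0 by omega, ?_⟩
          show (v.val - 3 : ℕ) = par v.val
          unfold par; split_ifs <;> omega
        · rintro u ⟨hu, (⟨hv0, hupar⟩ | ⟨hu0, hupar⟩)⟩ <;>
            simp only [codeSet, Set.mem_setOf_eq] at hu
          · apply Fin.ext
            show u.val = v.val - 3
            unfold par at hupar
            split_ifs at hupar <;> omega
          · exfalso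
            unfold par at hupar
            split_ifs at hupar <;> omega

lemma codeSet_inj {k : ℕ} : Function.Injective (codeSet (k := k)) := by
  intro f g h
  funext i
  have hfi : (f i).val < 3 := (f i).2
  have hgi : (g i).val < 3 := (g i).2
  have hbnd : 7 * i.val + (f i).val + 1 < 7 * k := by have := i.2; omega
  set v : Fin (7 * k) := ⟨7 * i.val + (f i).val + 1, hbnd⟩ with hv
  have hblk : blk v = i := Fin.ext (by show (7 * i.val + (f i).val + 1) / 7 = i.val; omega)
  have hmem : v ∈ codeSet f := by
    left
    rw [hblk]
    show (7 * i.val + (f i).val + 1) % 7 = (f i).val + 1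
    omega
  rw [h] at hmem
  rcases hmem with hm | hm
  · rw [hblk] at hm
    have : (7 * i.val + (f i).val + 1) % 7 = (g i).val + 1 := hm
    apply Fin.ext
    omega
  · exfalso
    have : 4 ≤ (7 * i.val + (f i).val + 1) % 7 := hm.1
    omega

lemma many_codes (k : ℕ) :
    3 ^ k ≤ Nat.card {S : Set (Fin (7 * k)) // IsPerfectCode (TG k) S} := by
  have hinj : Function.Injective
      (fun f : Fin k → Fin 3 =>
        (⟨codeSet f, codeSet_perfect f⟩ : {S // IsPerfectCode (TG k) S})) := by
    intro f g h
    exact codeSet_inj (congrArg Subtype.val h)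
  calc (3:ℕ) ^ k = Nat.card (Fin k → Fin 3) := by simp [Nat.card_eq_fintype_card]
    _ ≤ _ := Nat.card_le_card_of_injective _ hinj

lemma codes_bound (n : ℕ) (P : Set (Fin n) → Prop) :
    Nat.card {S : Set (Fin n) // P S} ≤ 2 ^ n := by
  calc Nat.card {S : Set (Fin n) // P S} ≤ Nat.card (Set (Fin n)) :=
        Nat.card_le_card_of_injective _ Subtype.val_injective
    _ = 2 ^ n := by simp [Nat.card_eq_fintype_card, Fintype.card_set]

theorem stmt_7 :
    (∀ k : ℕ, 0 < k → ∃ T : SimpleGraph (Fin (7 * k)),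
      T.Connected ∧ T.IsAcyclic ∧
      3 ^ k ≤ Nat.card {S : Set (Fin (7 * k)) // IsPerfectCode T S}) ∧
    (3 : ℝ) ^ ((1 : ℝ) / 7) ≤
      Filter.atTop.limsup (fun n : ℕ =>
        ((sSup {m : ℕ | ∃ T : SimpleGraph (Fin n), T.Connected ∧ T.IsAcyclic ∧
          m = Nat.card {S : Set (Fin n) // IsPerfectCode T S}} : ℕ) : ℝ) ^ ((1 : ℝ) / n)) := by
  have part1 : ∀ k : ℕ, 0 < k → ∃ T : SimpleGraph (Fin (7 * k)),
      T.Connected ∧ T.IsAcyclic ∧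
      3 ^ k ≤ Nat.card {S : Set (Fin (7 * k)) // IsPerfectCode T S} :=
    fun k hk => ⟨TG k, TG_connected hk, TG_acyclic, many_codes k⟩
  refine ⟨part1, ?_⟩
  set A : ℕ → Set ℕ := fun n =>
    {m : ℕ | ∃ T : SimpleGraph (Fin n), T.Connected ∧ T.IsAcyclic ∧
      m = Nat.card {S : Set (Fin n) // IsPerfectCode T S}} with hA
  have hbd : ∀ n, ∀ m ∈ A n, m ≤ 2 ^ n := by
    rintro n m ⟨T, _, _, rfl⟩
    exact codes_bound n _
  have hlb : ∀ k : ℕ, 0 < k → ∃ m ∈ A (7 * k), 3 ^ k ≤ m := by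
    intro k hk
    obtain ⟨T, hT1, hT2, hT3⟩ := part1 k hk
    exact ⟨Nat.card {S : Set (Fin (7 * k)) // IsPerfectCode T S}, ⟨T, hT1, hT2, rfl⟩, hT3⟩
  set u : ℕ → ℝ := fun n => ((sSup (A n) : ℕ) : ℝ) ^ ((1 : ℝ) / n) with hu
  show (3 : ℝ) ^ ((1 : ℝ) / 7) ≤ Filter.atTop.limsup u
  have hsupb : ∀ n, sSup (A n) ≤ 2 ^ n := fun n => csSup_le' (fun m hm => hbd n m hm)
  have hub : ∀ n, u n ≤ 2 := by
    intro n
    rcases Nat.eq_zero_or_pos n with h | h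
    · subst h
      simp only [hu, Nat.cast_zero, div_zero, Real.rpow_zero]
      norm_num
    · have h1 : ((sSup (A n) : ℕ) : ℝ) ≤ ((2 ^ n : ℕ) : ℝ) := by exact_mod_cast hsupb n
      have h2 : u n ≤ (((2:ℝ) ^ n)) ^ ((1:ℝ)/n) := by
        rw [hu]
        push_cast
        exact Real.rpow_le_rpow (by positivity) (by exact_mod_cast h1) (by positivity)
      calc u n ≤ ((2:ℝ) ^ n) ^ ((1:ℝ)/n) := h2
        _ = 2 := by
          rw [← Real.rpow_natCast 2 n, ← Real.rpow_mul (by norm_num)]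
          rw [mul_one_div, div_self (by exact_mod_cast h.ne' : (n:ℝ) ≠ 0), Real.rpow_one]
  apply Filter.le_limsup_of_frequently_le
  · rw [Filter.frequently_atTop]
    intro N
    refine ⟨7 * (N + 1), by omega, ?_⟩
    obtain ⟨m, hmA, hm3⟩ := hlb (N + 1) (by omega)
    have hmem : m ≤ sSup (A (7 * (N + 1))) :=
      le_csSup ⟨2 ^ (7 * (N + 1)), fun x hx => hbd _ x hx⟩ hmA
    have h3 : (3:ℕ) ^ (N+1) ≤ sSup (A (7 * (N + 1))) := le_trans hm3 hmem
    have hcast : ((3:ℝ)) ^ ((N+1 : ℕ)) ≤ ((sSup (A (7 * (N + 1))) : ℕ) : ℝ) := by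
      have := (Nat.cast_le (α := ℝ)).2 h3
      calc ((3:ℝ)) ^ ((N+1:ℕ)) = (((3^(N+1) : ℕ)) : ℝ) := by push_cast; ring
        _ ≤ _ := this
    have hkne : ((N:ℝ) + 1) ≠ 0 := by positivity
    have hrw : (3:ℝ) ^ ((1:ℝ)/7)
        = ((3:ℝ) ^ ((N+1:ℕ))) ^ ((1:ℝ)/((7*(N+1) : ℕ) : ℝ)) := by
      rw [← Real.rpow_natCast 3 (N+1), ← Real.rpow_mul (by norm_num : (0:ℝ) ≤ 3)]
      congr 1
      have hc7 : ((7 * (N + 1) : ℕ) : ℝ) = 7 * ((N:ℝ) + 1) := by push_cast; ring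
      rw [hc7]
      push_cast
      field_simp
    rw [hu, hrw]
    exact Real.rpow_le_rpow (by positivity) hcast (by positivity)
  · exact Filter.isBoundedUnder_of ⟨2, hub⟩
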